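/- Let ρ1 ∈ (0,1) and ρ2 ∈ (0,1−ρ1). Suppose C' is a real 2×2 matrix with C'₁₂ = C'₂₁, C'₁₁ = ρ1(1−ρ1), C'₁₁ + C'₁₂ + C'₂₁ + C'₂₂ = (ρ1+ρ2)(1−ρ1−ρ2), and A·C' = C'·Aᵀ. Then C'₁₂ = C'₂₁ = −ρ1(1−ρ1) and C'₂₂ = ρ2(1−ρ2) + 2ρ1(1−ρ1) − 2ρ1ρ2; that is, C' equals the susceptibility matrix C. -/
import Mathlib


open Matrix

/-- The Jacobian of the average current of the two-species TASEP. -/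
def matA (ρ1 ρ2 : ℝ) : Matrix (Fin 2) (Fin 2) ℝ :=
  !![1 - 2*ρ1, 0; -2*ρ2, 1 - 2*(ρ1 + ρ2)]

/-- The susceptibility matrix of the two-species TASEP. -/
def matC (ρ1 ρ2 : ℝ) : Matrix (Fin 2) (Fin 2) ℝ :=
  !![ρ1*(1 - ρ1), -(ρ1*(1 - ρ1));
     -(ρ1*(1 - ρ1)), ρ2*(1 - ρ2) + 2*ρ1*(1 - ρ1) - 2*ρ1*ρ2]

/-- Any symmetric matrix with the prescribed diagonal sums satisfying A·C' = C'·Aᵀ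
is the susceptibility matrix. -/
theorem susceptibility_unique
    (ρ1 ρ2 : ℝ) (h1 : ρ1 ∈ Set.Ioo (0:ℝ) 1) (h2 : ρ2 ∈ Set.Ioo (0:ℝ) (1 - ρ1))
    (C' : Matrix (Fin 2) (Fin 2) ℝ)
    (hsymm : C' 0 1 = C' 1 0)
    (h11 : C' 0 0 = ρ1*(1 - ρ1))
    (hsum : C' 0 0 + C' 0 1 + C' 1 0 + C' 1 1 = (ρ1 + ρ2)*(1 - ρ1 - ρ2))
    (hAC : matA ρ1 ρ2 * C' = C' * (matA ρ1 ρ2)ᵀ) :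
    C' 0 1 = -(ρ1*(1 - ρ1)) ∧ C' 1 0 = -(ρ1*(1 - ρ1)) ∧
      C' 1 1 = ρ2*(1 - ρ2) + 2*ρ1*(1 - ρ1) - 2*ρ1*ρ2 ∧ C' = matC ρ1 ρ2 := by
  have hρ2 : ρ2 ≠ 0 := ne_of_gt h2.1
  have key := congrFun (congrFun hAC 0) 1
  simp [matA, Matrix.mul_apply, Fin.sum_univ_two, Matrix.transpose_apply, Matrix.vecHead, Matrix.vecTail] at key
  have h01 : C' 0 1 = -(ρ1*(1 - ρ1)) := by
    have : ρ2 * C' 0 1 = ρ2 * (-(ρ1*(1-ρ1))) := by rw [h11] at key; linarith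
    exact mul_left_cancel₀ hρ2 this
  have h10 : C' 1 0 = -(ρ1*(1 - ρ1)) := by rw [← hsymm]; exact h01
  have h22 : C' 1 1 = ρ2*(1 - ρ2) + 2*ρ1*(1 - ρ1) - 2*ρ1*ρ2 := by nlinarith [hsum]
  refine ⟨h01, h10, h22, ?_⟩
  ext i j
  fin_cases i <;> fin_cases j <;> simp [matC, h11, h01, h10, h22]
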